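/- Let G be a claw-free graph that is minimally nonperfectly divisible, and let v ∈ V(G). Then the subgraph of G induced on the set M(v) of non-neighbors of v contains no induced antihole of odd length at least 7 (i.e., no complement of an odd cycle of length ≥ 7). -/

import Mathlib

open SimpleGraph

variable {V : Type}

/-- The clique number of the subgraph of `G` induced on `S`. -/
noncomputable def omegaOn (G : SimpleGraph V) (S : Set V) : ℕ :=
  sSup {n | ∃ s : Finset V, ↑s ⊆ S ∧ G.IsNClique n s}

/-- The subgraph of `G` induced on `S` is a perfect graph. -/
def IsPerfectOn (G : SimpleGraph V) (S : Set V) : Prop :=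
  ∀ T : Set V, T ⊆ S → (G.induce T).chromaticNumber = (omegaOn G T : ℕ∞)

/-- Every nonempty induced subgraph of `G[S]` admits a perfect division. -/
def PerfDivOn (G : SimpleGraph V) (S : Set V) : Prop :=
  ∀ H : Set V, H ⊆ S → H.Nonempty →
    ∃ A B : Set V, A ∪ B = H ∧ Disjoint A B ∧
      IsPerfectOn G A ∧ omegaOn G B < omegaOn G H

/-- `G` is minimally nonperfectly divisible. -/
def MNPD (G : SimpleGraph V) : Prop :=
  ¬ PerfDivOn G Set.univ ∧ ∀ S : Set V, S ≠ Set.univ → PerfDivOn G S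

/-- The external neighbourhood `N(X)`. -/
def extNbhd (G : SimpleGraph V) (X : Set V) : Set V :=
  {v | v ∉ X ∧ ∃ x ∈ X, G.Adj v x}

/-- `G` has no induced claw (`K_{1,3}`). -/
def ClawFree (G : SimpleGraph V) : Prop :=
  ¬ ∃ a b c d : V, b ≠ c ∧ b ≠ d ∧ c ≠ d ∧
    G.Adj a b ∧ G.Adj a c ∧ G.Adj a d ∧
    ¬ G.Adj b c ∧ ¬ G.Adj b d ∧ ¬ G.Adj c d

/-! ### Auxiliary lemmas -/

open Fin.NatCast

section Aux

variable {G : SimpleGraph V}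

/- Fin arithmetic helpers -/

lemma finCastInj {n : ℕ} [NeZero n] {c d : ℕ} (hc : c < n) (hd : d < n)
    (h : (c : Fin n) = (d : Fin n)) : c = d := by
  have h2 := congrArg Fin.val h
  rwa [Fin.val_natCast, Fin.val_natCast, Nat.mod_eq_of_lt hc, Nat.mod_eq_of_lt hd] at h2

lemma finShiftNe {n : ℕ} [NeZero n] (a : Fin n) {c d : ℕ} (hc : c < n) (hd : d < n)
    (h : c ≠ d) : a + (c : Fin n) ≠ a + (d : Fin n) :=
  fun H => h (finCastInj hc hd (add_left_cancel H))

lemma finShiftNe0 {n : ℕ} [NeZero n] (a : Fin n) {d : ℕ} (hd : d < n) (h : d ≠ 0) :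
    a ≠ a + (d : Fin n) := by
  have h0 : (0 : ℕ) < n := Nat.pos_of_ne_zero (NeZero.ne n)
  have := finShiftNe a h0 hd (Ne.symm h)
  simpa using this

lemma finShiftAdd {n : ℕ} [NeZero n] (a : Fin n) (c d e : ℕ) (h : c + d = e) :
    a + (c : Fin n) + (d : Fin n) = a + (e : Fin n) := by
  subst h; push_cast; abel

/- omegaOn helpers -/

lemma omegaSet_nonempty (S : Set V) :
    Set.Nonempty {n | ∃ s : Finset V, ↑s ⊆ S ∧ G.IsNClique n s} :=
  ⟨0, ∅, by simp, by simp⟩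

lemma omegaSet_bddAbove [Fintype V] (S : Set V) :
    BddAbove {n | ∃ s : Finset V, ↑s ⊆ S ∧ G.IsNClique n s} := by
  refine ⟨Fintype.card V, ?_⟩
  rintro k ⟨s, -, hs⟩
  rw [← hs.2]
  exact le_trans (Finset.card_le_card (Finset.subset_univ s)) (le_of_eq Finset.card_univ)

lemma omegaOn_mono [Fintype V] {S T : Set V} (h : S ⊆ T) :
    omegaOn G S ≤ omegaOn G T :=
  csSup_le_csSup (omegaSet_bddAbove T) (omegaSet_nonempty S)
    (fun _ ⟨s, hsS, hs⟩ => ⟨s, hsS.trans h, hs⟩)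

lemma le_omegaOn [Fintype V] {S : Set V} {m : ℕ} {s : Finset V}
    (hs : ↑s ⊆ S) (h : G.IsNClique m s) : m ≤ omegaOn G S :=
  le_csSup (omegaSet_bddAbove S) ⟨s, hs, h⟩

lemma omegaOn_le [Fintype V] {S : Set V} {m : ℕ}
    (h : ∀ (k : ℕ) (s : Finset V), ↑s ⊆ S → G.IsNClique k s → k ≤ m) :
    omegaOn G S ≤ m :=
  csSup_le (omegaSet_nonempty S) (fun k ⟨s, h1, h2⟩ => h k s h1 h2)

lemma omegaOn_union_le [Fintype V] {S T : Set V} (hd : Disjoint S T)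
    (hanti : ∀ a ∈ S, ∀ b ∈ T, ¬ G.Adj a b) :
    omegaOn G (S ∪ T) ≤ max (omegaOn G S) (omegaOn G T) := by
  apply omegaOn_le
  intro k s hs hk
  by_cases hsS : (↑s : Set V) ⊆ S
  · exact le_max_of_le_left (le_omegaOn hsS hk)
  · obtain ⟨y, hys, hyS⟩ := Set.not_subset.mp hsS
    have hyT : y ∈ T := (hs hys).resolve_left hyS
    have hsT : (↑s : Set V) ⊆ T := by
      intro x hxs
      rcases hs hxs with hxS | hxT
      · by_cases hxy : x = y
        · exact absurd (hxy ▸ hyT) (Set.disjoint_left.mp hd hxS)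
        · exact absurd (hk.1 hxs hys hxy) (hanti x hxS y hyT)
      · exact hxT
    exact le_max_of_le_right (le_omegaOn hsT hk)

/- coloring helpers -/

lemma colorable_induce_mono {S T : Set V} (h : S ⊆ T) {m : ℕ}
    (hc : (G.induce T).Colorable m) : (G.induce S).Colorable m := by
  obtain ⟨C⟩ := hc
  exact ⟨Coloring.mk (fun u => C ⟨u.1, h u.2⟩)
    (fun {a b} hab => C.valid (by exact hab))⟩

lemma chromaticNumber_induce_mono {S T : Set V} (h : S ⊆ T) :
    (G.induce S).chromaticNumber ≤ (G.induce T).chromaticNumber :=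
  chromaticNumber_le_of_forall_imp (fun _ => colorable_induce_mono h)

lemma colorable_induce_union {S T : Set V}
    (hanti : ∀ a ∈ S, ∀ b ∈ T, ¬ G.Adj a b) {m : ℕ}
    (h1 : (G.induce S).Colorable m) (h2 : (G.induce T).Colorable m) :
    (G.induce (S ∪ T)).Colorable m := by
  classical
  obtain ⟨C1⟩ := h1
  obtain ⟨C2⟩ := h2
  refine ⟨Coloring.mk
    (fun u => if h : u.1 ∈ S then C1 ⟨u.1, h⟩ else C2 ⟨u.1, u.2.resolve_left h⟩) ?_⟩
  intro a b hab
  have hGab : G.Adj a.1 b.1 := hab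
  split_ifs with h1' h2' h2'
  · exact C1.valid (by exact hGab)
  · exact absurd hGab (hanti a.1 h1' b.1 (b.2.resolve_left h2'))
  · exact absurd hGab.symm (hanti b.1 h2' a.1 (a.2.resolve_left h1'))
  · exact C2.valid (by exact hGab)

lemma perfect_union_aux [Fintype V] {U1 U2 : Set V} (hd : Disjoint U1 U2)
    (hanti : ∀ a ∈ U1, ∀ b ∈ U2, ¬ G.Adj a b)
    (e1 : (G.induce U1).chromaticNumber = (omegaOn G U1 : ℕ∞))
    (e2 : (G.induce U2).chromaticNumber = (omegaOn G U2 : ℕ∞))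
    (h12 : omegaOn G U1 ≤ omegaOn G U2) :
    (G.induce (U1 ∪ U2)).chromaticNumber = (omegaOn G (U1 ∪ U2) : ℕ∞) := by
  have hωeq : omegaOn G (U1 ∪ U2) = omegaOn G U2 := by
    refine le_antisymm ?_ (omegaOn_mono Set.subset_union_right)
    have h := omegaOn_union_le hd hanti
    rwa [max_eq_right h12] at h
  have hc1 : (G.induce U1).Colorable (omegaOn G U2) :=
    chromaticNumber_le_iff_colorable.mp (by rw [e1]; exact_mod_cast h12)
  have hc2 : (G.induce U2).Colorable (omegaOn G U2) :=
    chromaticNumber_le_iff_colorable.mp (le_of_eq e2)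
  have hc : (G.induce (U1 ∪ U2)).Colorable (omegaOn G U2) :=
    colorable_induce_union hanti hc1 hc2
  refine le_antisymm ?_ ?_
  · rw [hωeq]; exact hc.chromaticNumber_le
  · rw [hωeq, ← e2]; exact chromaticNumber_induce_mono Set.subset_union_right

lemma isPerfectOn_union [Fintype V] {S T : Set V} (hd : Disjoint S T)
    (hanti : ∀ a ∈ S, ∀ b ∈ T, ¬ G.Adj a b)
    (hS : IsPerfectOn G S) (hT : IsPerfectOn G T) : IsPerfectOn G (S ∪ T) := by
  intro U hU
  have hUeq : U = (U ∩ S) ∪ (U ∩ T) := by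
    rw [← Set.inter_union_distrib_left]
    exact (Set.inter_eq_left.mpr hU).symm
  have hd' : Disjoint (U ∩ S) (U ∩ T) :=
    hd.mono Set.inter_subset_right Set.inter_subset_right
  have hanti' : ∀ a ∈ U ∩ S, ∀ b ∈ U ∩ T, ¬ G.Adj a b :=
    fun a ha b hb => hanti a ha.2 b hb.2
  have e1 := hS (U ∩ S) Set.inter_subset_right
  have e2 := hT (U ∩ T) Set.inter_subset_right
  rcases le_total (omegaOn G (U ∩ S)) (omegaOn G (U ∩ T)) with h | h
  · rw [hUeq]
    exact perfect_union_aux hd' hanti' e1 e2 h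
  · rw [hUeq, Set.union_comm]
    exact perfect_union_aux hd'.symm
      (fun a ha b hb hadj => hanti' b hb a ha hadj.symm) e2 e1 h

end Aux

theorem stmt_14 [Fintype V] (G : SimpleGraph V) (hclaw : ClawFree G)
    (hG : MNPD G) (v : V) :
    ¬ ∃ n : ℕ, 7 ≤ n ∧ Odd n ∧ ∃ f : Fin n → V, Function.Injective f ∧
      (∀ i : Fin n, f i ≠ v ∧ ¬ G.Adj v (f i)) ∧
      (∀ i j : Fin n, i ≠ j →
        (G.Adj (f i) (f j) ↔ ¬ ((i.val + 1) % n = j.val ∨ (j.val + 1) % n = i.val))) := by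
  rintro ⟨n, hn7, hodd, f, hinj, hvf, hadj⟩
  haveI : NeZero n := ⟨by omega⟩
  -- numeric bounds
  have hlt : ∀ c : ℕ, c ≤ 6 → c < n := fun c hc => by omega
  -- translate the adjacency criterion
  have hval1 : ∀ i : Fin n, (i + ((1 : ℕ) : Fin n)).val = (i.val + 1) % n := by
    intro i
    rw [Fin.val_add, Fin.val_natCast, Nat.mod_eq_of_lt (show (1:ℕ) < n by omega)]
  have hsucc_iff : ∀ i j : Fin n, ((i.val + 1) % n = j.val ↔ j = i + ((1 : ℕ) : Fin n)) := by
    intro i j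
    constructor
    · intro h
      exact Fin.ext (by rw [hval1 i, ← h])
    · intro h
      rw [h, hval1 i]
  have adjf : ∀ i j : Fin n, j ≠ i → j ≠ i + ((1 : ℕ) : Fin n) →
      i ≠ j + ((1 : ℕ) : Fin n) → G.Adj (f i) (f j) := by
    intro i j h1 h2 h3
    rw [hadj i j (Ne.symm h1)]
    rintro (h | h)
    · exact h2 ((hsucc_iff i j).mp h)
    · exact h3 ((hsucc_iff j i).mp h)
  have nonadjf : ∀ a : Fin n, ¬ G.Adj (f a) (f (a + ((1 : ℕ) : Fin n))) := by
    intro a h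
    have hne : a ≠ a + ((1 : ℕ) : Fin n) := finShiftNe0 a (hlt 1 (by omega)) one_ne_zero
    rw [hadj a _ hne] at h
    exact h (Or.inl ((hsucc_iff a _).mpr rfl))
  have adjf2 : ∀ a : Fin n, G.Adj (f a) (f (a + ((2 : ℕ) : Fin n))) := by
    intro a
    refine adjf a _ (Ne.symm (finShiftNe0 a (hlt 2 (by omega)) (by omega))) ?_ ?_
    · exact finShiftNe a (hlt 2 (by omega)) (hlt 1 (by omega)) (by omega)
    · rw [finShiftAdd a 2 1 3 rfl]
      exact finShiftNe0 a (hlt 3 (by omega)) (by omega)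
  -- the set of vertices with no neighbour on the antihole
  set Z : Set V := {u | ∀ i : Fin n, ¬ G.Adj u (f i)} with hZdef
  have hfZ : ∀ a : Fin n, f a ∉ Z := fun a h => h _ (adjf2 a)
  -- every vertex with a neighbour on the antihole has two consecutive neighbours on it
  have hCP : ∀ x : V, (∃ j, G.Adj x (f j)) →
      ∃ a, G.Adj x (f a) ∧ G.Adj x (f (a + ((1 : ℕ) : Fin n))) := by
    rintro x ⟨j0, hj0⟩
    by_cases hxr : ∃ m, f m = x
    · obtain ⟨m, rfl⟩ := hxr
      refine ⟨m + ((2 : ℕ) : Fin n), adjf2 m, ?_⟩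
      rw [finShiftAdd m 2 1 3 rfl]
      refine adjf m _ (Ne.symm (finShiftNe0 m (hlt 3 (by omega)) (by omega))) ?_ ?_
      · exact finShiftNe m (hlt 3 (by omega)) (hlt 1 (by omega)) (by omega)
      · rw [finShiftAdd m 3 1 4 rfl]
        exact finShiftNe0 m (hlt 4 (by omega)) (by omega)
    · push_neg at hxr
      by_contra hU
      push_neg at hU
      -- no two consecutive neighbours
      have hUs : ∀ a : Fin n, G.Adj x (f a) → ¬ G.Adj x (f (a + ((1 : ℕ) : Fin n))) := hU
      -- no two consecutive non-neighbours either
      have hT : ∀ a : Fin n, ¬ G.Adj x (f a) → G.Adj x (f (a + ((1 : ℕ) : Fin n))) := by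
        intro a ha1
        by_contra ha2
        have hsub : ∀ i, G.Adj x (f i) →
            i + ((1 : ℕ) : Fin n) = a ∨ i = a + ((2 : ℕ) : Fin n) := by
          intro i hi
          by_contra hcon
          push_neg at hcon
          obtain ⟨hc1, hc2⟩ := hcon
          refine hclaw ⟨f i, x, f a, f (a + ((1 : ℕ) : Fin n)), ?_, ?_, ?_,
            hi.symm, ?_, ?_, ha1, ha2, nonadjf a⟩
          · exact fun h => hxr a h.symm
          · exact fun h => hxr _ h.symm
          · exact fun h => finShiftNe0 a (hlt 1 (by omega)) one_ne_zero (hinj h)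
          · refine adjf i a ?_ ?_ ?_
            · exact fun h => ha1 (h ▸ hi)
            · exact fun h => hc1 h.symm
            · exact fun h => ha2 (h ▸ hi)
          · refine adjf i _ ?_ ?_ ?_
            · exact fun h => ha2 (h ▸ hi)
            · exact fun h => ha1 ((add_right_cancel h) ▸ hi)
            · intro h
              rw [finShiftAdd a 1 1 2 rfl] at h
              exact hc2 h
        obtain ⟨b, hb1⟩ : ∃ b : Fin n, b + ((1 : ℕ) : Fin n) = a :=
          ⟨a - ((1 : ℕ) : Fin n), by abel⟩
        by_cases hbAdj : G.Adj x (f b)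
        · -- claw centred at f b with leaves x, f (b+4), f (b+5)
          have h4 : ¬ G.Adj x (f (b + ((4 : ℕ) : Fin n))) := by
            intro h
            rcases hsub _ h with h' | h'
            · rw [finShiftAdd b 4 1 5 rfl, ← hb1] at h'
              exact finShiftNe b (hlt 5 (by omega)) (hlt 1 (by omega)) (by omega) h'
            · rw [← hb1, finShiftAdd b 1 2 3 rfl] at h'
              exact finShiftNe b (hlt 4 (by omega)) (hlt 3 (by omega)) (by omega) h'
          have h5 : ¬ G.Adj x (f (b + ((5 : ℕ) : Fin n))) := by
            intro h
            rcases hsub _ h with h' | h'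
            · rw [finShiftAdd b 5 1 6 rfl, ← hb1] at h'
              exact finShiftNe b (hlt 6 (by omega)) (hlt 1 (by omega)) (by omega) h'
            · rw [← hb1, finShiftAdd b 1 2 3 rfl] at h'
              exact finShiftNe b (hlt 5 (by omega)) (hlt 3 (by omega)) (by omega) h'
          refine hclaw ⟨f b, x, f (b + ((4 : ℕ) : Fin n)), f (b + ((5 : ℕ) : Fin n)),
            ?_, ?_, ?_, hbAdj.symm, ?_, ?_, h4, h5, ?_⟩
          · exact fun h => hxr _ h.symm
          · exact fun h => hxr _ h.symm
          · intro h
            exact finShiftNe b (hlt 4 (by omega)) (hlt 5 (by omega)) (by omega) (hinj h)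
          · refine adjf b _ (Ne.symm (finShiftNe0 b (hlt 4 (by omega)) (by omega))) ?_ ?_
            · exact finShiftNe b (hlt 4 (by omega)) (hlt 1 (by omega)) (by omega)
            · rw [finShiftAdd b 4 1 5 rfl]
              exact finShiftNe0 b (hlt 5 (by omega)) (by omega)
          · refine adjf b _ (Ne.symm (finShiftNe0 b (hlt 5 (by omega)) (by omega))) ?_ ?_
            · exact finShiftNe b (hlt 5 (by omega)) (hlt 1 (by omega)) (by omega)
            · rw [finShiftAdd b 5 1 6 rfl]
              exact finShiftNe0 b (hlt 6 (by omega)) (by omega)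
          · have hna := nonadjf (b + ((4 : ℕ) : Fin n))
            rwa [finShiftAdd b 4 1 5 rfl] at hna
        · by_cases hcAdj : G.Adj x (f (a + ((2 : ℕ) : Fin n)))
          · -- claw centred at f (a+2) with leaves x, f (a+4), f (a+5)
            have h4 : ¬ G.Adj x (f (a + ((4 : ℕ) : Fin n))) := by
              intro h
              rcases hsub _ h with h' | h'
              · rw [finShiftAdd a 4 1 5 rfl] at h'
                exact finShiftNe0 a (hlt 5 (by omega)) (by omega) h'.symm
              · exact finShiftNe a (hlt 4 (by omega)) (hlt 2 (by omega)) (by omega) h'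
            have h5 : ¬ G.Adj x (f (a + ((5 : ℕ) : Fin n))) := by
              intro h
              rcases hsub _ h with h' | h'
              · rw [finShiftAdd a 5 1 6 rfl] at h'
                exact finShiftNe0 a (hlt 6 (by omega)) (by omega) h'.symm
              · exact finShiftNe a (hlt 5 (by omega)) (hlt 2 (by omega)) (by omega) h'
            refine hclaw ⟨f (a + ((2 : ℕ) : Fin n)), x, f (a + ((4 : ℕ) : Fin n)),
              f (a + ((5 : ℕ) : Fin n)), ?_, ?_, ?_, hcAdj.symm, ?_, ?_, h4, h5, ?_⟩
            · exact fun h => hxr _ h.symm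
            · exact fun h => hxr _ h.symm
            · intro h
              exact finShiftNe a (hlt 4 (by omega)) (hlt 5 (by omega)) (by omega) (hinj h)
            · refine adjf _ _ (finShiftNe a (hlt 4 (by omega)) (hlt 2 (by omega)) (by omega)) ?_ ?_
              · rw [finShiftAdd a 2 1 3 rfl]
                exact finShiftNe a (hlt 4 (by omega)) (hlt 3 (by omega)) (by omega)
              · rw [finShiftAdd a 4 1 5 rfl]
                exact finShiftNe a (hlt 2 (by omega)) (hlt 5 (by omega)) (by omega)
            · refine adjf _ _ (finShiftNe a (hlt 5 (by omega)) (hlt 2 (by omega)) (by omega)) ?_ ?_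
              · rw [finShiftAdd a 2 1 3 rfl]
                exact finShiftNe a (hlt 5 (by omega)) (hlt 3 (by omega)) (by omega)
              · rw [finShiftAdd a 5 1 6 rfl]
                exact finShiftNe a (hlt 2 (by omega)) (hlt 6 (by omega)) (by omega)
            · have hna := nonadjf (a + ((4 : ℕ) : Fin n))
              rwa [finShiftAdd a 4 1 5 rfl] at hna
          · rcases hsub j0 hj0 with h | h
            · exact hbAdj (by rw [show b = j0 from by rw [← hb1] at h; exact (add_right_cancel h).symm]; exact hj0)
            · exact hcAdj (h ▸ hj0)
      -- parity contradiction: the cycle would be 2-coloured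
      have hstep : ∀ a : Fin n,
          G.Adj x (f (a + ((1 : ℕ) : Fin n))) ↔ ¬ G.Adj x (f a) :=
        fun a => ⟨fun h2 h1 => hUs a h1 h2, hT a⟩
      have hind : ∀ m : ℕ,
          (G.Adj x (f ((m : ℕ) : Fin n)) ↔ (Even m ↔ G.Adj x (f ((0 : ℕ) : Fin n)))) := by
        intro m
        induction m with
        | zero => simp
        | succ k ih =>
          have hcast : ((k + 1 : ℕ) : Fin n) = ((k : ℕ) : Fin n) + ((1 : ℕ) : Fin n) := by
            push_cast; ring
          rw [hcast, hstep, ih, Nat.even_add_one]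
          tauto
      have hfin := hind n
      rw [Fin.natCast_self] at hfin
      have h0 : ((0 : ℕ) : Fin n) = (0 : Fin n) := Nat.cast_zero
      rw [h0] at hfin
      have hnotEven : ¬ Even n := by
        obtain ⟨t, ht⟩ := hodd
        rintro ⟨u, hu⟩
        omega
      tauto
  -- Z is closed under adjacency
  have hclosed : ∀ z ∈ Z, ∀ x : V, G.Adj z x → x ∈ Z := by
    intro z hz x hzx
    intro j hxj
    obtain ⟨a, ha1, ha2⟩ := hCP x ⟨j, hxj⟩
    refine hclaw ⟨x, z, f a, f (a + ((1 : ℕ) : Fin n)), ?_, ?_, ?_,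
      hzx.symm, ha1, ha2, hz a, hz _, nonadjf a⟩
    · exact fun h => hfZ a (h ▸ hz)
    · exact fun h => hfZ _ (h ▸ hz)
    · exact fun h => finShiftNe0 a (hlt 1 (by omega)) one_ne_zero (hinj h)
  -- assemble the perfect division of the whole graph
  have hvZ : v ∈ Z := fun i => (hvf i).2
  have hf0 : f ((0 : ℕ) : Fin n) ∉ Z := hfZ _
  have hZne_univ : Z ≠ Set.univ := fun h => hf0 (h ▸ Set.mem_univ _)
  have hZc_ne_univ : Zᶜ ≠ Set.univ := fun h =>
    ((h ▸ Set.mem_univ v : v ∈ Zᶜ)) hvZ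
  obtain ⟨A1, B1, hab1, hd1, hp1, ho1⟩ :=
    hG.2 Z hZne_univ Z subset_rfl ⟨v, hvZ⟩
  obtain ⟨A2, B2, hab2, hd2, hp2, ho2⟩ :=
    hG.2 Zᶜ hZc_ne_univ Zᶜ subset_rfl ⟨f ((0 : ℕ) : Fin n), hf0⟩
  have hA1Z : A1 ⊆ Z := hab1 ▸ Set.subset_union_left
  have hB1Z : B1 ⊆ Z := hab1 ▸ Set.subset_union_right
  have hA2Z : A2 ⊆ Zᶜ := hab2 ▸ Set.subset_union_left
  have hB2Z : B2 ⊆ Zᶜ := hab2 ▸ Set.subset_union_right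
  have hZanti : ∀ a ∈ Z, ∀ b ∈ Zᶜ, ¬ G.Adj a b :=
    fun a ha b hb hadj' => hb (hclosed a ha b hadj')
  have hdZ : Disjoint Z Zᶜ := disjoint_compl_right
  apply hG.1
  intro H hHsub hHne
  by_cases hH : H = Set.univ
  · subst hH
    refine ⟨A1 ∪ A2, B1 ∪ B2, ?_, ?_, ?_, ?_⟩
    · calc (A1 ∪ A2) ∪ (B1 ∪ B2) = (A1 ∪ B1) ∪ (A2 ∪ B2) := Set.union_union_union_comm _ _ _ _
        _ = Z ∪ Zᶜ := by rw [hab1, hab2]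
        _ = Set.univ := Set.union_compl_self Z
    · refine Set.disjoint_union_left.mpr ⟨?_, ?_⟩
      · exact Set.disjoint_union_right.mpr ⟨hd1, hdZ.mono hA1Z hB2Z⟩
      · exact Set.disjoint_union_right.mpr ⟨(hdZ.symm).mono hA2Z hB1Z, hd2⟩
    · exact isPerfectOn_union (hdZ.mono hA1Z hA2Z)
        (fun a ha b hb => hZanti a (hA1Z ha) b (hA2Z hb)) hp1 hp2
    · have h1 : omegaOn G B1 < omegaOn G Set.univ :=
        lt_of_lt_of_le ho1 (omegaOn_mono (Set.subset_univ Z))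
      have h2 : omegaOn G B2 < omegaOn G Set.univ :=
        lt_of_lt_of_le ho2 (omegaOn_mono (Set.subset_univ Zᶜ))
      calc omegaOn G (B1 ∪ B2) ≤ max (omegaOn G B1) (omegaOn G B2) :=
            omegaOn_union_le (hdZ.mono hB1Z hB2Z)
              (fun a ha b hb => hZanti a (hB1Z ha) b (hB2Z hb))
        _ < omegaOn G Set.univ := max_lt h1 h2
  · exact hG.2 H hH H subset_rfl hHne
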